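/- If Q : F_p^n → ℝ/ℤ is a non-classical polynomial of degree d ≥ 1, then pQ (the p-fold sum of Q with itself in ℝ/ℤ) is a non-classical polynomial of degree ≤ max(d − p + 1, 0). -/

import Mathlib

open scoped BigOperators

noncomputable section

/-- The circle group `𝕋 = ℝ/ℤ`. -/
abbrev 𝕋 : Type := AddCircle (1 : ℝ)

/-- The character `e(x) = e^{2πix}` on `𝕋`, valued in `ℂ`. -/
def ee (x : 𝕋) : ℂ := (AddCircle.toCircle x : ℂ)

/-- The average `E_{x ∈ α}[f(x)]` of a complex-valued function on a finite type. -/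
def cavg {α : Type*} [Fintype α] (f : α → ℂ) : ℂ := (∑ x, f x) / (Fintype.card α : ℂ)

/-- The average of a real-valued function on a finite type. -/
def ravg {α : Type*} [Fintype α] (f : α → ℝ) : ℝ := (∑ x, f x) / (Fintype.card α : ℝ)

/-- Multiplicative derivative `Δ_h f (x) = f(x+h) conj (f x)`. -/
def mDeriv {G : Type*} [Add G] (h : G) (f : G → ℂ) : G → ℂ :=
  fun x => f (x + h) * (starRingEnd ℂ) (f x)

/-- `E_{h_1,…,h_d,x}[(Δ_{h_1} ⋯ Δ_{h_d} f)(x)]`. -/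
def gowersAvg {G : Type*} [AddCommGroup G] [Fintype G] : ℕ → (G → ℂ) → ℂ
  | 0, f => cavg f
  | d + 1, f => cavg fun h => gowersAvg d (mDeriv h f)

/-- The Gowers norm `‖f‖_{U^d} = |E_{h_1,…,h_d,x}[(Δ_{h_1} ⋯ Δ_{h_d} f)(x)]|^{1/2^d}`. -/
def gowersNorm {G : Type*} [AddCommGroup G] [Fintype G] (d : ℕ) (f : G → ℂ) : ℝ :=
  ‖gowersAvg d f‖ ^ ((1 : ℝ) / 2 ^ d)

/-- Additive derivative `D_h P (x) = P(x+h) - P(x)`. -/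
def aDeriv {G M : Type*} [Add G] [Sub M] (h : G) (P : G → M) : G → M :=
  fun x => P (x + h) - P x

/-- Iterated additive derivative `D_{h_1} ⋯ D_{h_k} P`. -/
def iterADeriv {G M : Type*} [AddCommGroup G] [AddCommGroup M] :
    {k : ℕ} → (Fin k → G) → (G → M) → (G → M)
  | 0, _, P => P
  | _ + 1, h, P => aDeriv (h 0) (iterADeriv (Fin.tail h) P)

/-- `P` is a (non-classical) polynomial of degree ≤ `d`:
all `(d+1)`-fold additive derivatives vanish identically. -/
def IsPolyDeg {G M : Type*} [AddCommGroup G] [AddCommGroup M] (d : ℕ) (P : G → M) : Prop :=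
  ∀ (h : Fin (d + 1) → G) (x : G), iterADeriv h P x = 0

/-- `P` has degree exactly `d`. -/
def ExactDeg {G M : Type*} [AddCommGroup G] [AddCommGroup M] (d : ℕ) (P : G → M) : Prop :=
  IsPolyDeg d P ∧ ∀ d' < d, ¬ IsPolyDeg d' P

/-- The degree of a polynomial: the least `d` with `IsPolyDeg d P`. -/
def polyDeg {G M : Type*} [AddCommGroup G] [AddCommGroup M] (P : G → M) : ℕ :=
  sInf {d | IsPolyDeg d P}

/-- `P` has `d`-rank at most `r`: `P = Γ(Q_1,…,Q_r)` with the `Q_i` of degree ≤ `d-1`. -/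
def HasRankLE {G : Type*} [AddCommGroup G] (d : ℕ) (P : G → 𝕋) (r : ℕ) : Prop :=
  ∃ (Q : Fin r → G → 𝕋) (Γ : (Fin r → 𝕋) → 𝕋),
    (∀ i, IsPolyDeg (d - 1) (Q i)) ∧ ∀ x, P x = Γ fun i => Q i x

/-- The `d`-rank of `P`, in `ℕ∞` (`⊤` if no finite decomposition exists;
for `d = 1` this is `⊤` exactly when `P` is non-constant). -/
def rankd {G : Type*} [AddCommGroup G] (d : ℕ) (P : G → 𝕋) : ℕ∞ :=
  sInf {r : ℕ∞ | ∃ m : ℕ, r = m ∧ HasRankLE d P m}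

/-- `P` has depth exactly `k` (shift zero): values in `U_{k+1} = (1/p^{k+1})ℤ/ℤ` but not all
in `U_k`. -/
def ExactDepth {G : Type*} (p k : ℕ) (P : G → 𝕋) : Prop :=
  (∀ x, (p ^ (k + 1)) • P x = 0) ∧ ¬ (∀ x, (p ^ k) • P x = 0)

/-- Application of a linear form `L = (w_t)_t` to a tuple of points of `F_p^n`:
`(x_t)_t ↦ ∑_t w_t x_t`. -/
def formApply {p : ℕ} {ι : Type*} [Fintype ι] {n : ℕ} (L : ι → ZMod p)
    (x : ι → Fin n → ZMod p) : Fin n → ZMod p := ∑ t, L t • x t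

/-- The `(d,k)`-dependency set of a system of forms `L`: the tuples
`(λ_j) ∈ [0, p^{k+1}-1]^m` with `∑_j λ_j P(L_j(x)) ≡ 0` for every non-classical polynomial `P`
of degree `d` and depth `k` (over every `F_p^n`). -/
def DepSet (p k d : ℕ) {ι μ : Type*} [Fintype ι] [Fintype μ]
    (L : μ → ι → ZMod p) : Set (μ → ℕ) :=
  {lam | (∀ j, lam j < p ^ (k + 1)) ∧
    ∀ (n : ℕ) (P : (Fin n → ZMod p) → 𝕋), ExactDeg d P → ExactDepth p k P →
      ∀ x : ι → Fin n → ZMod p, (∑ j, lam j • P (formApply (L j) x)) = 0}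

/-- `b_1,…,b_m ∈ 𝕋^κ` are consistent with the forms `L` with respect to degree data `dd`
and depth data `kk`. -/
def ConsistentWith (p : ℕ) {ι κ : Type*} [Fintype ι] [Fintype κ] {m : ℕ}
    (L : Fin m → ι → ZMod p) (dd kk : κ → ℕ) (b : Fin m → κ → 𝕋) : Prop :=
  ∀ i : κ, (∀ j, (p ^ (kk i + 1)) • b j i = 0) ∧
    ∀ lam ∈ DepSet p (kk i) (dd i) L, (∑ j, lam j • b j i) = 0

/-- The polynomial factor defined by `P_1,…,P_C` with depths `k_1,…,k_C` has rank greater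
than `r`: every integer combination `∑ λ_i P_i`, with the `λ_i` not all divisible by the
respective `p^{k_i+1}`, has `D`-rank > `r` where `D = max_i deg(λ_i P_i)`. -/
def FactorRankGT (p : ℕ) {G : Type*} [AddCommGroup G] {C : ℕ}
    (P : Fin C → G → 𝕋) (k : Fin C → ℕ) (r : ℕ) : Prop :=
  ∀ lam : Fin C → ℤ, (∃ i, ¬ ((p : ℤ) ^ (k i + 1) ∣ lam i)) →
    (r : ℕ∞) < rankd (Finset.univ.sup fun i => polyDeg fun x => lam i • P i x)
      (fun x => ∑ i, lam i • P i x)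

/-- Cauchy–Schwarz complexity ≤ `d`: for each `i`, the remaining forms can be partitioned into
`d+1` classes, with `L_i` outside the linear span of each class. -/
def CSComplexityLE (p : ℕ) {m : ℕ} {ι : Type*} [Fintype ι] (d : ℕ)
    (L : Fin m → ι → ZMod p) : Prop :=
  ∀ i, ∃ c : Fin m → Fin (d + 1), ∀ t,
    L i ∉ Submodule.span (ZMod p) {v | ∃ j, j ≠ i ∧ c j = t ∧ v = L j}


section Aux

variable {G M : Type*} [AddCommGroup G] [AddCommGroup M]

lemma aDeriv_comm (g h : G) (P : G → M) :
    aDeriv g (aDeriv h P) = aDeriv h (aDeriv g P) := by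
  funext x
  simp only [aDeriv]
  rw [add_right_comm x g h]
  abel

lemma iterADeriv_aDeriv : ∀ {k : ℕ} (h : Fin k → G) (g : G) (P : G → M),
    iterADeriv h (aDeriv g P) = aDeriv g (iterADeriv h P)
  | 0, _, _, _ => rfl
  | k + 1, h, g, P => by
    show aDeriv (h 0) (iterADeriv (Fin.tail h) (aDeriv g P)) = _
    rw [iterADeriv_aDeriv (Fin.tail h) g P, aDeriv_comm]
    rfl

lemma isPolyDeg_aDeriv {d : ℕ} {P : G → M} (hP : IsPolyDeg (d + 1) P) (g : G) :
    IsPolyDeg d (aDeriv g P) := by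
  intro h x
  have h1 := hP (Fin.cons g h) x
  rw [iterADeriv_aDeriv]
  simpa only [iterADeriv, Fin.cons_zero, Fin.tail_cons] using h1

lemma isPolyDeg_of_aDeriv {d : ℕ} {P : G → M} (hP : ∀ g, IsPolyDeg d (aDeriv g P)) :
    IsPolyDeg (d + 1) P := by
  intro h x
  show aDeriv (h 0) (iterADeriv (Fin.tail h) P) x = 0
  rw [← iterADeriv_aDeriv]
  exact hP (h 0) (Fin.tail h) x

lemma isPolyDeg_aDeriv_self {d : ℕ} {P : G → M} (hP : IsPolyDeg d P) (g : G) :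
    IsPolyDeg d (aDeriv g P) := by
  intro h x
  rw [iterADeriv_aDeriv]
  show iterADeriv h P (x + g) - iterADeriv h P x = 0
  rw [hP h (x + g), hP h x, sub_zero]

lemma isPolyDeg_mono {d e : ℕ} {P : G → M} (hP : IsPolyDeg d P) (hde : d ≤ e) :
    IsPolyDeg e P := by
  induction e, hde using Nat.le_induction with
  | base => exact hP
  | succ e _ ih => exact isPolyDeg_of_aDeriv fun g => isPolyDeg_aDeriv_self ih g

lemma isPolyDeg_zero_iff {P : G → M} : IsPolyDeg 0 P ↔ ∀ g x, P (x + g) = P x := by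
  constructor
  · intro hP g x
    have h1 := hP (fun _ => g) x
    have h2 : aDeriv g P x = 0 := h1
    simpa [aDeriv, sub_eq_zero] using h2
  · intro hP h x
    show P (x + h 0) - P x = 0
    rw [hP, sub_self]

lemma iterADeriv_const (m : ℕ) (g : G) (P : G → M) :
    iterADeriv (fun _ : Fin m => g) P = (fwdDiff g)^[m] P := by
  induction m with
  | zero => rfl
  | succ m ih =>
    show aDeriv g (iterADeriv (fun _ : Fin m => g) P) = _
    rw [ih, Function.iterate_succ_apply']
    rfl

end Aux

open Finset in
lemma altsum (p : ℕ) (hp : p ≠ 0) :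
    ∑ j ∈ Finset.range (p + 1), ((-1 : ℤ) ^ (p - j) * (p.choose j)) = 0 := by
  have hcong : ∀ j ∈ Finset.range (p + 1),
      ((-1 : ℤ) ^ (p - j) * (p.choose j)) = (-1) ^ p * ((-1) ^ j * (p.choose j)) := by
    intro j hj
    rw [Finset.mem_range] at hj
    have hj' : j ≤ p := by omega
    have hsq : ((-1 : ℤ) ^ j) * ((-1 : ℤ) ^ j) = 1 := by
      rw [← mul_pow]; norm_num
    have hadd : ((-1 : ℤ)) ^ p = (-1) ^ (p - j) * (-1) ^ j := by
      rw [← pow_add, Nat.sub_add_cancel hj']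
    have h1 : ((-1 : ℤ)) ^ (p - j) = (-1) ^ p * (-1) ^ j := by
      calc ((-1 : ℤ)) ^ (p - j) = (-1) ^ (p - j) * ((-1) ^ j * (-1) ^ j) := by
            rw [hsq, mul_one]
        _ = ((-1) ^ (p - j) * (-1) ^ j) * (-1) ^ j := by ring
        _ = (-1) ^ p * (-1) ^ j := by rw [← hadd]
    rw [h1, mul_assoc]
  rw [Finset.sum_congr rfl hcong, ← Finset.mul_sum,
    Int.alternating_sum_range_choose_of_ne hp, mul_zero]

lemma sum1 (q : ℕ) (hp : (q + 1).Prime) :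
    (∑ i ∈ Finset.range q, ((-1 : ℤ) ^ (q - i) * (((q + 1).choose (i + 1) / (q + 1) : ℕ) : ℤ)))
      + (if q + 1 = 2 then (1 : ℤ) else 0) = 0 := by
  have hq1 : ((q : ℤ) + 1) ≠ 0 := by positivity
  apply mul_left_cancel₀ hq1
  rw [mul_zero, mul_add, Finset.mul_sum]
  have hterm : ∀ i ∈ Finset.range q,
      ((q : ℤ) + 1) * ((-1 : ℤ) ^ (q - i) * (((q + 1).choose (i + 1) / (q + 1) : ℕ) : ℤ))
        = (-1 : ℤ) ^ (q + 1 - (i + 1)) * ((q + 1).choose (i + 1)) := by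
    intro i hi
    rw [Finset.mem_range] at hi
    have hdvd : (q + 1) ∣ (q + 1).choose (i + 1) :=
      hp.dvd_choose_self (Nat.succ_ne_zero i) (by omega)
    have hdm : (((q + 1).choose (i + 1) / (q + 1) : ℕ) : ℤ) * ((q : ℤ) + 1)
        = ((q + 1).choose (i + 1) : ℤ) := by
      exact_mod_cast Nat.div_mul_cancel hdvd
    have h2 : q + 1 - (i + 1) = q - i := by omega
    rw [h2]
    linear_combination ((-1 : ℤ) ^ (q - i)) * hdm
  rw [Finset.sum_congr rfl hterm]
  -- now relate to full alternating sum
  have hA := altsum (q + 1) (Nat.succ_ne_zero q)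
  rw [Finset.sum_range_succ, Finset.sum_range_succ'] at hA
  simp only [Nat.sub_self, pow_zero, Nat.choose_self, Nat.cast_one, mul_one, Nat.sub_zero,
    Nat.choose_zero_right, one_mul] at hA
  -- hA : ∑ i in range q, (-1)^(q+1-(i+1)) * C(q+1,i+1) + (-1)^(q+1) + 1 = 0
  have hm0 : ((q : ℤ) + 1) * (if q + 1 = 2 then (1 : ℤ) else 0) = (-1 : ℤ) ^ (q + 1) + 1 := by
    rcases hp.eq_two_or_odd' with h2 | hodd
    · have : q = 1 := by omega
      subst this; norm_num
    · have h2 : q + 1 ≠ 2 := by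
        intro h; rw [h] at hodd; simp [Nat.odd_iff] at hodd
      rw [if_neg h2, mul_zero, Odd.neg_one_pow hodd]
      ring
  rw [hm0]
  linarith [hA]

lemma sum2 (q : ℕ) (hq : q ≠ 0) (hp : (q + 1).Prime) :
    ∑ i ∈ Finset.range q,
      ((-1 : ℤ) ^ (q - i) * (((q + 1).choose (i + 1) / (q + 1) : ℕ) : ℤ) * ((i : ℤ) + 1)) = -1 := by
  have hq1 : ((q : ℤ) + 1) ≠ 0 := by positivity
  apply mul_left_cancel₀ hq1
  rw [Finset.mul_sum]
  have hterm : ∀ i ∈ Finset.range q,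
      ((q : ℤ) + 1) * ((-1 : ℤ) ^ (q - i) * (((q + 1).choose (i + 1) / (q + 1) : ℕ) : ℤ) * ((i : ℤ) + 1))
        = ((q : ℤ) + 1) * ((-1 : ℤ) ^ (q - i) * (q.choose i)) := by
    intro i hi
    rw [Finset.mem_range] at hi
    have hdvd : (q + 1) ∣ (q + 1).choose (i + 1) :=
      hp.dvd_choose_self (Nat.succ_ne_zero i) (by omega)
    have hdm : (((q + 1).choose (i + 1) / (q + 1) : ℕ) : ℤ) * ((q : ℤ) + 1)
        = ((q + 1).choose (i + 1) : ℤ) := by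
      exact_mod_cast Nat.div_mul_cancel hdvd
    have hsucc : (q + 1) * q.choose i = (q + 1).choose (i + 1) * (i + 1) :=
      Nat.add_one_mul_choose_eq q i
    have hsucc' : ((q : ℤ) + 1) * (q.choose i : ℤ) = ((q + 1).choose (i + 1) : ℤ) * ((i : ℤ) + 1) := by
      exact_mod_cast hsucc
    linear_combination ((-1 : ℤ) ^ (q - i) * ((i : ℤ) + 1)) * hdm - ((-1 : ℤ) ^ (q - i)) * hsucc'
  rw [Finset.sum_congr rfl hterm, ← Finset.mul_sum]
  have hA := altsum q hq
  rw [Finset.sum_range_succ] at hA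
  simp only [Nat.sub_self, pow_zero, Nat.choose_self, Nat.cast_one, mul_one] at hA
  have : ∑ i ∈ Finset.range q, ((-1 : ℤ) ^ (q - i) * (q.choose i)) = -1 := by linarith
  rw [this]

lemma key_mulp (p : ℕ) (hp : p.Prime) {G M : Type*} [AddCommGroup G] [AddCommGroup M]
    (hG : ∀ g : G, p • g = 0) :
    ∀ (d : ℕ) (Q : G → M), IsPolyDeg d Q → IsPolyDeg (d - (p - 1)) (fun x => p • Q x) := by
  obtain ⟨q, rfl⟩ : ∃ q, p = q + 1 := ⟨p - 1, by have := hp.two_le; omega⟩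
  have hq1 : q + 1 - 1 = q := by omega
  intro d
  induction d using Nat.strong_induction_on with
  | _ d ih =>
  intro Q hQ
  rcases Nat.eq_zero_or_pos d with rfl | hd
  · rw [Nat.zero_sub]
    rw [isPolyDeg_zero_iff] at hQ ⊢
    intro g x; rw [hQ g x]
  rcases le_or_gt (q + 1) d with hdp | hdp
  · -- d ≥ p : use the inductive step on derivatives
    have hd1 : d - (q + 1 - 1) = (d - 1 - (q + 1 - 1)) + 1 := by omega
    rw [hd1]
    apply isPolyDeg_of_aDeriv
    intro g
    have hQ' : IsPolyDeg ((d - 1) + 1) Q := by rwa [Nat.sub_add_cancel hd]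
    have h1 := ih (d - 1) (by omega) (aDeriv g Q) (isPolyDeg_aDeriv hQ' g)
    have h2 : aDeriv g (fun x => (q + 1) • Q x) = fun x => (q + 1) • aDeriv g Q x := by
      funext x; simp [aDeriv, smul_sub]
    rw [h2]
    exact h1
  · -- 1 ≤ d < p : show p • Q is constant
    have h0 : d - (q + 1 - 1) = 0 := by omega
    rw [h0, isPolyDeg_zero_iff]
    -- Step 1: p • (D_g Q) is constant
    have hc : ∀ (g x : G), (q + 1) • Q (x + g) = (q + 1) • Q x + ((q + 1) • Q g - (q + 1) • Q 0) := by
      intro g x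
      have hQ' : IsPolyDeg ((d - 1) + 1) Q := by rwa [Nat.sub_add_cancel hd]
      have h1 := ih (d - 1) (by omega) (aDeriv g Q) (isPolyDeg_aDeriv hQ' g)
      have h2 : (d - 1) - (q + 1 - 1) = 0 := by omega
      rw [h2, isPolyDeg_zero_iff] at h1
      have h3 : (q + 1) • aDeriv g Q x = (q + 1) • aDeriv g Q 0 := by
        have := h1 x 0
        simpa [zero_add] using this
      have h4 : (q + 1) • Q (x + g) - (q + 1) • Q x = (q + 1) • Q (0 + g) - (q + 1) • Q 0 := by
        simpa [aDeriv, smul_sub] using h3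
      rw [zero_add] at h4
      rw [← h4]; abel
    -- orbit formula
    have horb : ∀ (g : G) (j : ℕ), (q + 1) • Q ((j : ℕ) • g)
        = (q + 1) • Q 0 + j • ((q + 1) • Q g - (q + 1) • Q 0) := by
      intro g j
      induction j with
      | zero => simp
      | succ j ihj =>
        rw [show ((j + 1) : ℕ) • g = j • g + g from succ_nsmul g j, hc g (j • g), ihj,
          show ((j + 1) : ℕ) • ((q + 1) • Q g - (q + 1) • Q 0)
            = j • ((q + 1) • Q g - (q + 1) • Q 0) + ((q + 1) • Q g - (q + 1) • Q 0)
            from succ_nsmul _ j]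
        abel
    -- it suffices that the "slope" vanishes
    suffices hcz : ∀ g : G, (q + 1) • Q g - (q + 1) • Q 0 = 0 by
      intro g x
      have := hc g x
      rw [hcz g, add_zero] at this
      exact this
    intro g
    set c : M := (q + 1) • Q g - (q + 1) • Q 0 with hcdef
    -- the p-fold derivative in direction g vanishes
    have hkey : (0 : M) = ∑ j ∈ Finset.range (q + 1 + 1),
        ((-1 : ℤ) ^ (q + 1 - j) * ((q + 1).choose j)) • Q ((0 : G) + j • g) := by
      have h1 := isPolyDeg_mono hQ (show d ≤ q from by omega) (fun _ : Fin (q + 1) => g) (0 : G)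
      rw [iterADeriv_const, fwdDiff_iter_eq_sum_shift] at h1
      exact h1.symm
    simp only [zero_add] at hkey
    rw [Finset.sum_range_succ, Finset.sum_range_succ'] at hkey
    simp only [Nat.sub_self, pow_zero, Nat.choose_self, Nat.cast_one, mul_one, one_smul,
      Nat.sub_zero, Nat.choose_zero_right, zero_smul, hG g] at hkey
    -- hkey : 0 = (∑ i in range q, b_{i+1} • Q ((i+1) • g) + (-1)^(q+1) • Q 0) + Q 0
    have hterm : ∀ i ∈ Finset.range q,
        ((-1 : ℤ) ^ (q + 1 - (i + 1)) * ((q + 1).choose (i + 1))) • Q ((i + 1 : ℕ) • g)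
          = ((-1 : ℤ) ^ (q - i) * (((q + 1).choose (i + 1) / (q + 1) : ℕ) : ℤ)) • ((q + 1) • Q 0)
            + ((-1 : ℤ) ^ (q - i) * (((q + 1).choose (i + 1) / (q + 1) : ℕ) : ℤ) * ((i : ℤ) + 1)) • c := by
      intro i hi
      rw [Finset.mem_range] at hi
      have hdvd : (q + 1) ∣ (q + 1).choose (i + 1) :=
        hp.dvd_choose_self (Nat.succ_ne_zero i) (by omega)
      have h2 : q + 1 - (i + 1) = q - i := by omega
      have hdm : ((-1 : ℤ) ^ (q - i) * ((q + 1).choose (i + 1) : ℤ))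
          = ((-1 : ℤ) ^ (q - i) * (((q + 1).choose (i + 1) / (q + 1) : ℕ) : ℤ)) * ((q + 1 : ℕ) : ℤ) := by
        rw [mul_assoc]
        congr 1
        exact_mod_cast (Nat.div_mul_cancel hdvd).symm
      rw [h2, hdm, mul_smul, natCast_zsmul, horb g (i + 1), smul_add]
      congr 1
      rw [← natCast_zsmul c (i + 1), ← mul_smul]
      norm_cast
    rw [Finset.sum_congr rfl hterm, Finset.sum_add_distrib, ← Finset.sum_smul, ← Finset.sum_smul]
      at hkey
    rw [sum2 q (by omega) hp] at hkey
    -- combine the two Q 0 terms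
    have hm0 : ((-1 : ℤ) ^ (q + 1)) • Q 0 + Q 0
        = (if q + 1 = 2 then (1 : ℤ) else 0) • ((q + 1) • Q 0) := by
      have hb0 : ((-1 : ℤ) ^ (q + 1) + 1) = (if q + 1 = 2 then (1 : ℤ) else 0) * ((q + 1 : ℕ) : ℤ) := by
        rcases hp.eq_two_or_odd' with h2 | hodd
        · have hq : q = 1 := by omega
          subst hq; norm_num
        · have h2 : q + 1 ≠ 2 := by
            intro h; rw [h] at hodd; simp [Nat.odd_iff] at hodd
          rw [if_neg h2, zero_mul, Odd.neg_one_pow hodd]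
          ring
      calc ((-1 : ℤ) ^ (q + 1)) • Q 0 + Q 0 = ((-1 : ℤ) ^ (q + 1) + 1) • Q 0 := by
            rw [add_smul, one_smul]
        _ = ((if q + 1 = 2 then (1 : ℤ) else 0) * ((q + 1 : ℕ) : ℤ)) • Q 0 := by rw [hb0]
        _ = _ := by rw [mul_smul, natCast_zsmul]
    have hfinal : (0 : M) =
        ((∑ i ∈ Finset.range q, ((-1 : ℤ) ^ (q - i) * (((q + 1).choose (i + 1) / (q + 1) : ℕ) : ℤ)))
          + (if q + 1 = 2 then (1 : ℤ) else 0)) • ((q + 1) • Q 0) + (-1 : ℤ) • c := by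
      rw [add_smul]
      calc (0 : M) = _ := hkey
        _ = _ := by rw [← hm0]; abel
    rw [sum1 q hp, zero_smul, zero_add, neg_smul, one_smul] at hfinal
    exact neg_eq_zero.mp hfinal.symm

/-- If `Q : F_p^n → ℝ/ℤ` is a non-classical polynomial of degree `d ≥ 1`
(with shift zero, taking values in `U_{k+1}`), then `pQ` is a non-classical polynomial of
degree ≤ `max (d - p + 1) 0` (i.e. `d - (p-1)` with truncated subtraction). -/
theorem mulp_degree (p : ℕ) [Fact p.Prime] (n d : ℕ) (hd : 1 ≤ d)
    (Q : (Fin n → ZMod p) → 𝕋) (hQ : ExactDeg d Q)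
    (k : ℕ) (hshift : ∀ x, (p ^ (k + 1)) • Q x = 0) :
    IsPolyDeg (d - (p - 1)) (fun x => p • Q x) := by
  have hp : p.Prime := Fact.out
  have hG : ∀ g : Fin n → ZMod p, p • g = 0 := by
    intro g; funext i
    show p • g i = 0
    simp [nsmul_eq_mul, ZMod.natCast_self]
  exact key_mulp p hp hG d Q hQ.1

end
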